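/- Let m ≥ 1 and let α_0,…,α_m be strictly positive reals with Σ_{i=0}^m α_i = 1. Then every node power satisfies P_j ≥ 1 (for 1 ≤ j ≤ m), and consecutive node powers are distinct: P_j ≠ P_{j+1} for every 1 ≤ j ≤ m−1. (The latter is the invariant relied upon by powersort: the power of the new node never equals the power on top of the stack.) -/
import Mathlib


/-- The power of a split with boundaries `a < b`: the index of the first bit
in which the binary fractional expansions of `a` and `b` differ. -/
noncomputable def nodePower (a b : ℝ) : ℕ :=
  sInf {ℓ : ℕ | ⌊a * 2 ^ ℓ⌋ < ⌊b * 2 ^ ℓ⌋}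

lemma np_set_nonempty {a b : ℝ} (hab : a < b) :
    {ℓ : ℕ | ⌊a * 2 ^ ℓ⌋ < ⌊b * 2 ^ ℓ⌋}.Nonempty := by
  obtain ⟨ℓ, hℓ⟩ := pow_unbounded_of_one_lt (1 / (b - a)) (by norm_num : (1:ℝ) < 2)
  refine ⟨ℓ, ?_⟩
  simp only [Set.mem_setOf_eq]
  have hba : 0 < b - a := by linarith
  have h1 : 1 < (b - a) * 2 ^ ℓ := by
    rw [div_lt_iff₀ hba] at hℓ; linarith [hℓ]
  have h2 : a * 2 ^ ℓ + 1 ≤ b * 2 ^ ℓ := by ring_nf; ring_nf at h1; linarith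
  have := Int.floor_le (a * 2 ^ ℓ)
  have : (⌊a * 2 ^ ℓ⌋ : ℝ) + 1 ≤ b * 2 ^ ℓ := by linarith
  have := Int.le_floor.mpr (by push_cast; linarith : ((⌊a * 2 ^ ℓ⌋ + 1 : ℤ) : ℝ) ≤ b * 2 ^ ℓ)
  omega

lemma np_mem {a b : ℝ} (hab : a < b) :
    ⌊a * 2 ^ nodePower a b⌋ < ⌊b * 2 ^ nodePower a b⌋ :=
  Nat.sInf_mem (np_set_nonempty hab)

lemma np_pos {a b : ℝ} (ha : 0 ≤ a) (hab : a < b) (hb : b < 1) :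
    1 ≤ nodePower a b := by
  rcases Nat.eq_zero_or_pos (nodePower a b) with h | h
  · exfalso
    have := np_mem hab
    rw [h] at this
    simp only [pow_zero, mul_one] at this
    have h1 : ⌊a⌋ = 0 := Int.floor_eq_zero_iff.mpr ⟨ha, by linarith⟩
    have h2 : ⌊b⌋ = 0 := Int.floor_eq_zero_iff.mpr ⟨by linarith, hb⟩
    omega
  · exact h

lemma floor_double {x : ℝ} {k : ℕ} {n : ℤ} (h : ⌊x * 2 ^ k⌋ = n) :
    2 * n ≤ ⌊x * 2 ^ (k + 1)⌋ ∧ ⌊x * 2 ^ (k + 1)⌋ ≤ 2 * n + 1 := by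
  have h1 : (n : ℝ) ≤ x * 2 ^ k := h ▸ Int.floor_le _
  have h2 : x * 2 ^ k < n + 1 := h ▸ Int.lt_floor_add_one _
  have he : x * 2 ^ (k + 1) = (x * 2 ^ k) * 2 := by ring
  constructor
  · exact Int.le_floor.mpr (by rw [he]; push_cast; linarith)
  · have : ⌊x * 2 ^ (k + 1)⌋ < 2 * n + 2 := Int.floor_lt.mpr (by rw [he]; push_cast; linarith)
    omega

lemma np_ne {a b c : ℝ} (hab : a < b) (hbc : b < c)
    (h1 : 1 ≤ nodePower a b) (h2 : 1 ≤ nodePower b c) :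
    nodePower a b ≠ nodePower b c := by
  intro heq
  obtain ⟨k, hk⟩ : ∃ k, nodePower a b = k + 1 :=
    ⟨nodePower a b - 1, (Nat.succ_pred_eq_of_pos h1).symm⟩
  have mab := np_mem hab
  have mbc := np_mem hbc
  rw [hk] at mab
  rw [← heq, hk] at mbc
  -- k is below both infima
  have hka' : k < nodePower a b := by omega
  have hkb' : k < nodePower b c := by omega
  have hka : k ∉ {ℓ : ℕ | ⌊a * 2 ^ ℓ⌋ < ⌊b * 2 ^ ℓ⌋} := Nat.notMem_of_lt_sInf hka'
  have hkb : k ∉ {ℓ : ℕ | ⌊b * 2 ^ ℓ⌋ < ⌊c * 2 ^ ℓ⌋} := Nat.notMem_of_lt_sInf hkb'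
  simp only [Set.mem_setOf_eq, not_lt] at hka hkb
  have p2 : (0:ℝ) < 2 ^ k := by positivity
  have hmono1 : ⌊a * 2 ^ k⌋ ≤ ⌊b * 2 ^ k⌋ :=
    Int.floor_le_floor (by nlinarith)
  have hmono2 : ⌊b * 2 ^ k⌋ ≤ ⌊c * 2 ^ k⌋ :=
    Int.floor_le_floor (by nlinarith)
  have ea : ⌊a * 2 ^ k⌋ = ⌊b * 2 ^ k⌋ := by omega
  have ec : ⌊c * 2 ^ k⌋ = ⌊b * 2 ^ k⌋ := by omega
  obtain ⟨la, _⟩ := floor_double ea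
  obtain ⟨_, lc⟩ := floor_double ec
  omega

/-- For strictly positive leaf probabilities `α₀,…,α_m` summing to 1, every
node power `P_j = nodePower ((Σ_{i<j} αᵢ) - α_{j-1}/2) ((Σ_{i<j} αᵢ) + α_j/2)`
satisfies `P_j ≥ 1`, and consecutive node powers are distinct:
`P_j ≠ P_{j+1}` for `1 ≤ j ≤ m-1` (the invariant relied upon by powersort). -/
theorem nodePower_pos_and_consecutive_ne
    (m : ℕ) (hm : 1 ≤ m) (α : ℕ → ℝ)
    (hpos : ∀ i ≤ m, 0 < α i)
    (hsum : (∑ i ∈ Finset.range (m + 1), α i) = 1) :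
    (∀ j, 1 ≤ j → j ≤ m →
      1 ≤ nodePower ((∑ i ∈ Finset.range j, α i) - α (j - 1) / 2)
                    ((∑ i ∈ Finset.range j, α i) + α j / 2)) ∧
    (∀ j, 1 ≤ j → j ≤ m - 1 →
      nodePower ((∑ i ∈ Finset.range j, α i) - α (j - 1) / 2)
                ((∑ i ∈ Finset.range j, α i) + α j / 2)
        ≠ nodePower ((∑ i ∈ Finset.range (j + 1), α i) - α j / 2)
                    ((∑ i ∈ Finset.range (j + 1), α i) + α (j + 1) / 2)) := by
  -- basic facts
  have key : ∀ j, 1 ≤ j → j ≤ m →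
      0 ≤ (∑ i ∈ Finset.range j, α i) - α (j - 1) / 2 ∧
      (∑ i ∈ Finset.range j, α i) - α (j - 1) / 2 <
        (∑ i ∈ Finset.range j, α i) + α j / 2 ∧
      (∑ i ∈ Finset.range j, α i) + α j / 2 < 1 := by
    intro j hj1 hjm
    obtain ⟨p, rfl⟩ : ∃ p, j = p + 1 := ⟨j - 1, (Nat.succ_pred_eq_of_pos hj1).symm⟩
    have hsplit : (∑ i ∈ Finset.range (p + 1), α i)
        = (∑ i ∈ Finset.range p, α i) + α p := Finset.sum_range_succ α p
    have hppos : 0 < α p := hpos p (by omega)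
    have hjpos : 0 < α (p + 1) := hpos (p + 1) hjm
    have hnonneg : 0 ≤ ∑ i ∈ Finset.range p, α i :=
      Finset.sum_nonneg fun i hi => (hpos i (by simp at hi; omega)).le
    have hupper : (∑ i ∈ Finset.range (p + 1), α i) + α (p + 1) ≤ 1 := by
      rw [← Finset.sum_range_succ α (p + 1), ← hsum]
      apply Finset.sum_le_sum_of_subset_of_nonneg
      · exact Finset.range_subset_range.mpr (by omega)
      · intro i hi _
        exact (hpos i (by simp at hi; omega)).le
    refine ⟨?_, ?_, ?_⟩
    · simp only [Nat.add_sub_cancel]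
      rw [hsplit]; linarith
    · simp only [Nat.add_sub_cancel]; linarith
    · linarith
  constructor
  · intro j hj1 hjm
    obtain ⟨h0, hlt, h1⟩ := key j hj1 hjm
    exact np_pos h0 hlt h1
  · intro j hj1 hjm
    have hjm' : j ≤ m := by omega
    have hj1m : j + 1 ≤ m := by omega
    obtain ⟨h0, hlt, h1⟩ := key j hj1 hjm'
    obtain ⟨h0', hlt', h1'⟩ := key (j + 1) (by omega) hj1m
    have hmid : (∑ i ∈ Finset.range j, α i) + α j / 2
        = (∑ i ∈ Finset.range (j + 1), α i) - α j / 2 := by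
      rw [Finset.sum_range_succ α j]; ring
    simp only [Nat.add_sub_cancel] at hlt' h0'
    rw [← hmid] at hlt' h0' ⊢
    exact np_ne hlt hlt' (np_pos h0 hlt h1) (np_pos h0' hlt' h1')
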